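/- Let f, g : ℝ × ℝ → ℝ be continuously differentiable payoff-difference functions with f(1,1) > 0 and g(1,1) > 0. Then the point (1,1) is a locally asymptotically stable equilibrium of the coupled replicator system: (1,1) is a fixed point of the vector field, and there exists δ > 0 such that every solution (x(t), y(t)) defined on [0,∞) with values in [0,1] × [0,1] and initial condition satisfying |x(0) − 1| < δ and |y(0) − 1| < δ remains within any prescribed neighborhood of (1,1) and converges to (1,1) as t → ∞. -/
import Mathlib

open Filter Topology

/-- Helper: monotone on a convex set from `HasDerivAt` with nonneg derivative. -/
lemma repl_mono_aux {u : ℝ → ℝ} {d : ℝ → ℝ} {s : Set ℝ} (hs : Convex ℝ s)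
    (hd : ∀ t ∈ s, HasDerivAt u (d t) t) (hpos : ∀ t ∈ interior s, 0 ≤ d t) :
    MonotoneOn u s :=
  monotoneOn_of_deriv_nonneg hs
    (fun t ht => (hd t ht).continuousAt.continuousWithinAt)
    (fun t ht => ((hd t (interior_subset ht)).differentiableAt).differentiableWithinAt)
    (fun t ht => by rw [(hd t (interior_subset ht)).deriv]; exact hpos t ht)

/-- Helper: forward invariance of the region `(a,1] × (a,1]`. -/
lemma repl_invariant (f g : ℝ × ℝ → ℝ) (x y : ℝ → ℝ) (a c : ℝ) (ha : 0 < a)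
    (hx' : ∀ t ≥ (0:ℝ), HasDerivAt x (x t * (1 - x t) * f (x t, y t)) t)
    (hy' : ∀ t ≥ (0:ℝ), HasDerivAt y (y t * (1 - y t) * g (x t, y t)) t)
    (hbd : ∀ t ≥ (0:ℝ), x t ∈ Set.Icc (0:ℝ) 1 ∧ y t ∈ Set.Icc (0:ℝ) 1)
    (hc : 0 < c)
    (hfg : ∀ p : ℝ × ℝ, a ≤ p.1 → p.1 ≤ 1 → a ≤ p.2 → p.2 ≤ 1 → c ≤ f p ∧ c ≤ g p)
    (hx0 : a < x 0) (hy0 : a < y 0) :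
    ∀ t ≥ (0:ℝ), a < x t ∧ a < y t := by
  by_contra h
  push_neg at h
  obtain ⟨t₀, ht₀, hbad⟩ := h
  set B : Set ℝ := {t | 0 ≤ t ∧ (x t ≤ a ∨ y t ≤ a)} with hB
  have hBne : B.Nonempty := by
    refine ⟨t₀, ht₀, ?_⟩
    by_cases hxa : a < x t₀
    · exact Or.inr (hbad hxa)
    · exact Or.inl (le_of_not_gt hxa)
  have hBbdd : BddBelow B := ⟨0, fun t ht => ht.1⟩
  set t₁ := sInf B with ht₁def
  have ht₁0 : 0 ≤ t₁ := le_csInf hBne fun t ht => ht.1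
  -- t₁ ∈ B
  have ht₁B : t₁ ∈ B := by
    by_contra ht₁B
    have hgt : a < x t₁ ∧ a < y t₁ := by
      by_contra hcon
      push_neg at hcon
      apply ht₁B
      refine ⟨ht₁0, ?_⟩
      by_cases hxa : a < x t₁
      · exact Or.inr (hcon hxa)
      · exact Or.inl (le_of_not_gt hxa)
    have hcx : ContinuousAt x t₁ := (hx' t₁ ht₁0).continuousAt
    have hcy : ContinuousAt y t₁ := (hy' t₁ ht₁0).continuousAt
    have hopen : ∀ᶠ s in 𝓝 t₁, a < x s ∧ a < y s :=
      (hcx.eventually (eventually_gt_nhds hgt.1)).and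
        (hcy.eventually (eventually_gt_nhds hgt.2))
    obtain ⟨η, hη, hball⟩ := Metric.eventually_nhds_iff.mp hopen
    obtain ⟨s, hsB, hs⟩ := Real.lt_sInf_add_pos hBne hη
    have hst : t₁ ≤ s := csInf_le hBbdd hsB
    have : dist s t₁ < η := by
      rw [Real.dist_eq, abs_of_nonneg (by linarith)]
      linarith
    have := hball this
    rcases hsB.2 with h1 | h1
    · linarith [this.1]
    · linarith [this.2]
  have ht₁pos : 0 < t₁ := by
    rcases lt_or_eq_of_le ht₁0 with h | h
    · exact h
    · exfalso
      rcases ht₁B.2 with h1 | h1 <;> rw [← h] at h1 <;> linarith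
  -- on [0, t₁) we have a < x, a < y
  have hbefore : ∀ s, 0 ≤ s → s < t₁ → a < x s ∧ a < y s := by
    intro s hs0 hst
    by_contra hcon
    push_neg at hcon
    have hsB : s ∈ B := by
      refine ⟨hs0, ?_⟩
      by_cases hxa : a < x s
      · exact Or.inr (hcon hxa)
      · exact Or.inl (le_of_not_gt hxa)
    exact absurd (csInf_le hBbdd hsB) (not_le.mpr hst)
  -- monotonicity of x and of y on [0, t₁]
  have hmx : MonotoneOn x (Set.Icc 0 t₁) := by
    apply repl_mono_aux (convex_Icc 0 t₁) (fun t ht => hx' t ht.1)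
    intro t ht
    rw [interior_Icc] at ht
    have h1 := hbefore t ht.1.le ht.2
    have h2 := hbd t ht.1.le
    have hfpos := (hfg (x t, y t) h1.1.le h2.1.2 h1.2.le h2.2.2).1
    have : (0:ℝ) ≤ x t * (1 - x t) := mul_nonneg h2.1.1 (by linarith [h2.1.2])
    nlinarith
  have hmy : MonotoneOn y (Set.Icc 0 t₁) := by
    apply repl_mono_aux (convex_Icc 0 t₁) (fun t ht => hy' t ht.1)
    intro t ht
    rw [interior_Icc] at ht
    have h1 := hbefore t ht.1.le ht.2
    have h2 := hbd t ht.1.le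
    have hgpos := (hfg (x t, y t) h1.1.le h2.1.2 h1.2.le h2.2.2).2
    have : (0:ℝ) ≤ y t * (1 - y t) := mul_nonneg h2.2.1 (by linarith [h2.2.2])
    nlinarith
  have hx1 : a < x t₁ :=
    lt_of_lt_of_le hx0 (hmx ⟨le_refl 0, ht₁0⟩ ⟨ht₁0, le_refl t₁⟩ ht₁0)
  have hy1 : a < y t₁ :=
    lt_of_lt_of_le hy0 (hmy ⟨le_refl 0, ht₁0⟩ ⟨ht₁0, le_refl t₁⟩ ht₁0)
  rcases ht₁B.2 with h1 | h1 <;> linarith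

/-- Helper: a coordinate that is trapped and pushed upward converges to 1. -/
lemma repl_tendsto_one {u : ℝ → ℝ} {d : ℝ → ℝ} {a c : ℝ} (ha : 0 < a) (hc : 0 < c)
    (hu' : ∀ t ≥ (0:ℝ), HasDerivAt u (d t) t)
    (hub : ∀ t ≥ (0:ℝ), u t ≤ 1) (hlb : ∀ t ≥ (0:ℝ), a < u t)
    (hd : ∀ t ≥ (0:ℝ), u t * (1 - u t) * c ≤ d t) :
    Tendsto u atTop (𝓝 1) := by
  have hdnn : ∀ t ∈ interior (Set.Ici (0:ℝ)), 0 ≤ d t := by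
    intro t ht
    rw [interior_Ici] at ht
    have h1 := hlb t ht.le
    have h2 := hub t ht.le
    have h3 := hd t ht.le
    have : 0 ≤ u t * (1 - u t) * c :=
      mul_nonneg (mul_nonneg (by linarith) (by linarith)) hc.le
    linarith
  have hmono : MonotoneOn u (Set.Ici 0) :=
    repl_mono_aux (convex_Ici 0) (fun t ht => hu' t ht) hdnn
  -- supremum limit
  set z : ℝ → ℝ := fun t => u (max t 0) with hz
  have hzmono : Monotone z := fun s t hst =>
    hmono (Set.mem_Ici.mpr (le_max_right s 0)) (Set.mem_Ici.mpr (le_max_right t 0))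
      (max_le_max hst (le_refl 0))
  have hzbdd : BddAbove (Set.range z) := by
    refine ⟨1, ?_⟩
    rintro _ ⟨t, rfl⟩
    exact hub _ (le_max_right t 0)
  set L := ⨆ t, z t with hL
  have hzL : Tendsto z atTop (𝓝 L) := tendsto_atTop_ciSup hzmono hzbdd
  have hzequ : z =ᶠ[atTop] u := by
    filter_upwards [eventually_ge_atTop (0:ℝ)] with t ht
    simp [hz, max_eq_left ht]
  have huL : Tendsto u atTop (𝓝 L) := hzL.congr' hzequ
  have hL1 : L ≤ 1 := ciSup_le fun t => hub _ (le_max_right t 0)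
  have hLt : ∀ t ≥ (0:ℝ), u t ≤ L := by
    intro t ht
    have : z t ≤ L := le_ciSup hzbdd t
    simpa [hz, max_eq_left ht] using this
  have hL0 : a < L := lt_of_lt_of_le (hlb 0 le_rfl) (hLt 0 le_rfl)
  -- claim L = 1
  rcases lt_or_eq_of_le hL1 with hLlt | hLeq
  · exfalso
    set ε := a * (1 - L) * c with hε
    have hεpos : 0 < ε := mul_pos (mul_pos ha (by linarith)) hc
    have hw : MonotoneOn (fun t => u t - ε * t) (Set.Ici 0) := by
      apply repl_mono_aux (convex_Ici 0) (d := fun t => d t - ε)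
        (fun t ht => (hu' t ht).sub (by simpa using (hasDerivAt_id t).const_mul ε))
      intro t ht
      rw [interior_Ici] at ht
      have h1 := hlb t ht.le
      have h2 := hLt t ht.le
      have h3 := hd t ht.le
      have h4 : a * (1 - L) * c ≤ u t * (1 - u t) * c := by
        apply mul_le_mul_of_nonneg_right _ hc.le
        nlinarith
      rw [hε]
      linarith
    have key : ∀ t ≥ (0:ℝ), u 0 + ε * t ≤ u t := by
      intro t ht
      have := hw (Set.mem_Ici.mpr le_rfl) (Set.mem_Ici.mpr ht) ht
      simp only [mul_zero, sub_zero] at this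
      linarith
    have h1 := key (1/ε) (by positivity)
    have h2 := hub (1/ε) (by positivity)
    have h3 := hlb 0 le_rfl
    rw [mul_one_div, div_self hεpos.ne'] at h1
    linarith
  · rwa [hLeq] at huL

/-- If the payoff-difference functions `f, g` are continuously
differentiable with `f (1,1) > 0` and `g (1,1) > 0`, then `(1,1)` is a locally
asymptotically stable equilibrium of the coupled replicator system
`ẋ = x(1-x) f(x,y)`, `ẏ = y(1-y) g(x,y)`: it is a fixed point of the vector
field, and for every prescribed neighborhood `U` of `(1,1)` there is `δ > 0`
such that every `[0,1]²`-valued solution on `[0,∞)` starting `δ`-close to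
`(1,1)` stays in `U` and converges to `(1,1)` as `t → ∞`. -/
theorem replicator_one_one_locally_asymptotically_stable
    (f g : ℝ × ℝ → ℝ) (hf : ContDiff ℝ 1 f) (hg : ContDiff ℝ 1 g)
    (hf11 : 0 < f (1, 1)) (hg11 : 0 < g (1, 1)) :
    ((1 : ℝ) * (1 - 1) * f (1, 1), (1 : ℝ) * (1 - 1) * g (1, 1)) = (0, 0) ∧
      ∀ U ∈ 𝓝 (((1 : ℝ), (1 : ℝ))), ∃ δ > (0 : ℝ),
        ∀ x y : ℝ → ℝ,
          (∀ t ≥ (0 : ℝ), HasDerivAt x (x t * (1 - x t) * f (x t, y t)) t) →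
          (∀ t ≥ (0 : ℝ), HasDerivAt y (y t * (1 - y t) * g (x t, y t)) t) →
          (∀ t ≥ (0 : ℝ), x t ∈ Set.Icc (0 : ℝ) 1 ∧ y t ∈ Set.Icc (0 : ℝ) 1) →
          |x 0 - 1| < δ → |y 0 - 1| < δ →
          (∀ t ≥ (0 : ℝ), (x t, y t) ∈ U) ∧
            Tendsto (fun t => (x t, y t)) atTop (𝓝 ((1 : ℝ), (1 : ℝ))) := by
  constructor
  · norm_num
  intro U hU
  set c := min (f (1,1)) (g (1,1)) / 2 with hcdef
  have hcpos : 0 < c := half_pos (lt_min hf11 hg11)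
  have hcf : c < f (1,1) := by
    have := min_le_left (f (1,1)) (g (1,1)); rw [hcdef]; linarith
  have hcg : c < g (1,1) := by
    have := min_le_right (f (1,1)) (g (1,1)); rw [hcdef]; linarith
  have hfev : ∀ᶠ p in 𝓝 ((1:ℝ),(1:ℝ)), c < f p :=
    (hf.continuous.tendsto ((1:ℝ),(1:ℝ))).eventually (eventually_gt_nhds hcf)
  have hgev : ∀ᶠ p in 𝓝 ((1:ℝ),(1:ℝ)), c < g p :=
    (hg.continuous.tendsto ((1:ℝ),(1:ℝ))).eventually (eventually_gt_nhds hcg)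
  obtain ⟨ηf, hηf, hballf⟩ := Metric.eventually_nhds_iff.mp hfev
  obtain ⟨ηg, hηg, hballg⟩ := Metric.eventually_nhds_iff.mp hgev
  obtain ⟨ε, hε, hballU⟩ := Metric.mem_nhds_iff.mp hU
  set δ := min (min ηf ηg) (min ε 1) / 2 with hδdef
  have hδpos : 0 < δ := by
    apply half_pos
    exact lt_min (lt_min hηf hηg) (lt_min hε one_pos)
  have hδ1 : δ ≤ 1/2 := by
    have : min (min ηf ηg) (min ε 1) ≤ 1 := le_trans (min_le_right _ _) (min_le_right _ _)
    rw [hδdef]; linarith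
  have hδf : δ < ηf := by
    have : min (min ηf ηg) (min ε 1) ≤ ηf := le_trans (min_le_left _ _) (min_le_left _ _)
    rw [hδdef]; linarith [lt_min (lt_min hηf hηg) (lt_min hε one_pos)]
  have hδg : δ < ηg := by
    have : min (min ηf ηg) (min ε 1) ≤ ηg := le_trans (min_le_left _ _) (min_le_right _ _)
    rw [hδdef]; linarith [lt_min (lt_min hηf hηg) (lt_min hε one_pos)]
  have hδε : δ < ε := by
    have : min (min ηf ηg) (min ε 1) ≤ ε := le_trans (min_le_right _ _) (min_le_left _ _)
    rw [hδdef]; linarith [lt_min (lt_min hηf hηg) (lt_min hε one_pos)]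
  set a := 1 - δ with hadef
  have hapos : 0 < a := by rw [hadef]; linarith
  -- distance estimate for points in the box
  have hdist : ∀ p : ℝ × ℝ, a ≤ p.1 → p.1 ≤ 1 → a ≤ p.2 → p.2 ≤ 1 →
      dist p ((1:ℝ),(1:ℝ)) ≤ δ := by
    intro p h1 h2 h3 h4
    have e1 : (((1:ℝ),(1:ℝ)) : ℝ × ℝ).1 = 1 := rfl
    have e2 : (((1:ℝ),(1:ℝ)) : ℝ × ℝ).2 = 1 := rfl
    rw [Prod.dist_eq, e1, e2]
    simp only [hadef] at h1 h3
    apply max_le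
    · rw [Real.dist_eq, abs_le]
      constructor <;> linarith
    · rw [Real.dist_eq, abs_le]
      constructor <;> linarith
  have hfg : ∀ p : ℝ × ℝ, a ≤ p.1 → p.1 ≤ 1 → a ≤ p.2 → p.2 ≤ 1 → c ≤ f p ∧ c ≤ g p := by
    intro p h1 h2 h3 h4
    have hd := hdist p h1 h2 h3 h4
    exact ⟨(hballf (lt_of_le_of_lt hd hδf)).le, (hballg (lt_of_le_of_lt hd hδg)).le⟩
  refine ⟨δ, hδpos, ?_⟩
  intro x y hx' hy' hbd hx0 hy0
  have hx00 : a < x 0 := by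
    have h := (hbd 0 le_rfl).1
    have : |x 0 - 1| = 1 - x 0 := by
      rw [abs_of_nonpos (by linarith [h.2])]; ring
    rw [this] at hx0
    rw [hadef]; linarith
  have hy00 : a < y 0 := by
    have h := (hbd 0 le_rfl).2
    have : |y 0 - 1| = 1 - y 0 := by
      rw [abs_of_nonpos (by linarith [h.2])]; ring
    rw [this] at hy0
    rw [hadef]; linarith
  have hinv := repl_invariant f g x y a c hapos hx' hy' hbd hcpos hfg hx00 hy00
  constructor
  · intro t ht
    apply hballU
    have h1 := (hinv t ht).1
    have h2 := hbd t ht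
    have := hdist (x t, y t) h1.le h2.1.2 (hinv t ht).2.le h2.2.2
    exact Metric.mem_ball.mpr (lt_of_le_of_lt this hδε)
  · have hX : Tendsto x atTop (𝓝 1) := by
      apply repl_tendsto_one hapos hcpos hx' (fun t ht => (hbd t ht).1.2)
        (fun t ht => (hinv t ht).1)
      intro t ht
      have h1 := hbd t ht
      have h2 := (hfg (x t, y t) (hinv t ht).1.le h1.1.2 (hinv t ht).2.le h1.2.2).1
      have : (0:ℝ) ≤ x t * (1 - x t) := mul_nonneg h1.1.1 (by linarith [h1.1.2])
      nlinarith
    have hY : Tendsto y atTop (𝓝 1) := by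
      apply repl_tendsto_one hapos hcpos hy' (fun t ht => (hbd t ht).2.2)
        (fun t ht => (hinv t ht).2)
      intro t ht
      have h1 := hbd t ht
      have h2 := (hfg (x t, y t) (hinv t ht).1.le h1.1.2 (hinv t ht).2.le h1.2.2).2
      have : (0:ℝ) ≤ y t * (1 - y t) := mul_nonneg h1.2.1 (by linarith [h1.2.2])
      nlinarith
    exact hX.prodMk_nhds hY
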